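/- The sequences f(n)/2^n, Φ(n)/2^n, and D(n)/2^n all tend to 1 as n → ∞; that is, lim_{n→∞} f(n)/2^n = lim_{n→∞} Φ(n)/2^n = lim_{n→∞} D(n)/2^n = 1. -/

import Mathlib

/-- `f n` is the number of nonempty relatively prime subsets of `{1, ..., n}`. -/
def f (n : ℕ) : ℕ :=
  ((Finset.Icc 1 n).powerset.filter fun A => A.Nonempty ∧ A.gcd id = 1).card

/-- `Phi n` is the number of nonempty subsets of `{1, ..., n}` relatively prime to `n`. -/
def Phi (n : ℕ) : ℕ :=
  ((Finset.Icc 1 n).powerset.filter fun A => A.Nonempty ∧ (insert n A).gcd id = 1).card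

/-- `D n = ∑_{d ∣ n} f d` is the divisor sum of `f`. -/
def D (n : ℕ) : ℕ := ∑ d ∈ n.divisors, f d

lemma f_le_two_pow (n : ℕ) : f n ≤ 2 ^ n := by
  calc f n ≤ (Finset.Icc 1 n).powerset.card := Finset.card_filter_le _ _
    _ = 2 ^ n := by rw [Finset.card_powerset, Nat.card_Icc]; norm_num

lemma two_pow_le_f (n : ℕ) : 2 ^ n ≤ f n + (n * 2 ^ (n / 2) + 1) := by
  have hsplit := Finset.card_filter_add_card_filter_not
    (s := (Finset.Icc 1 n).powerset) (p := fun A => A.Nonempty ∧ A.gcd id = 1)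
  have hfn : ((Finset.Icc 1 n).powerset.filter fun A => A.Nonempty ∧ A.gcd id = 1).card = f n :=
    rfl
  have hcard : (Finset.Icc 1 n).powerset.card = 2 ^ n := by
    rw [Finset.card_powerset, Nat.card_Icc]; norm_num
  -- bound the bad set
  set bad := (Finset.Icc 1 n).powerset.filter fun A => ¬(A.Nonempty ∧ A.gcd id = 1) with hbad
  have hsub : bad ⊆ insert (∅ : Finset ℕ)
      ((Finset.Icc 2 n).biUnion fun d => ((Finset.Icc 1 n).filter (d ∣ ·)).powerset) := by
    intro A hA
    rw [hbad, Finset.mem_filter, Finset.mem_powerset] at hA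
    obtain ⟨hAsub, hAbad⟩ := hA
    rcases Finset.eq_empty_or_nonempty A with rfl | hne
    · exact Finset.mem_insert_self _ _
    · have hd : A.gcd id ≠ 1 := fun h => hAbad ⟨hne, h⟩
      obtain ⟨a, ha⟩ := hne
      have ha1 : 1 ≤ a ∧ a ≤ n := Finset.mem_Icc.mp (hAsub ha)
      have hdvda : A.gcd id ∣ a := Finset.gcd_dvd ha
      have hd0 : A.gcd id ≠ 0 := by
        intro h0
        rw [h0, Nat.zero_dvd] at hdvda
        omega
      have hdle : A.gcd id ≤ n := le_trans (Nat.le_of_dvd (by omega) hdvda) ha1.2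
      have hd2 : 2 ≤ A.gcd id := by omega
      refine Finset.mem_insert_of_mem (Finset.mem_biUnion.mpr ⟨A.gcd id,
        Finset.mem_Icc.mpr ⟨hd2, hdle⟩, Finset.mem_powerset.mpr ?_⟩)
      intro x hx
      exact Finset.mem_filter.mpr ⟨hAsub hx, Finset.gcd_dvd hx⟩
  have hbadcard : bad.card ≤ n * 2 ^ (n / 2) + 1 := by
    calc bad.card ≤ _ := Finset.card_le_card hsub
      _ ≤ ((Finset.Icc 2 n).biUnion fun d =>
            ((Finset.Icc 1 n).filter (d ∣ ·)).powerset).card + 1 := Finset.card_insert_le _ _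
      _ ≤ (∑ d ∈ Finset.Icc 2 n, (((Finset.Icc 1 n).filter (d ∣ ·)).powerset).card) + 1 := by
          exact Nat.add_le_add_right (Finset.card_biUnion_le) 1
      _ ≤ (∑ _d ∈ Finset.Icc 2 n, 2 ^ (n / 2)) + 1 := by
          refine Nat.add_le_add_right (Finset.sum_le_sum fun d hd => ?_) 1
          obtain ⟨hd2, _⟩ := Finset.mem_Icc.mp hd
          rw [Finset.card_powerset]
          have h1 : Finset.Icc 1 n = Finset.Ioc 0 n := rfl
          have h2 : ((Finset.Icc 1 n).filter (d ∣ ·)).card = n / d := by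
            rw [h1]; exact Nat.Ioc_filter_dvd_card_eq_div n d
          rw [h2]
          exact Nat.pow_le_pow_right (by norm_num) (Nat.div_le_div_left hd2 (by norm_num))
      _ ≤ n * 2 ^ (n / 2) + 1 := by
          rw [Finset.sum_const, smul_eq_mul, Nat.card_Icc]
          have : n + 1 - 2 ≤ n := by omega
          exact Nat.add_le_add_right (Nat.mul_le_mul_right _ this) 1
  omega

lemma f_le_Phi (n : ℕ) : f n ≤ Phi n := by
  classical
  apply Finset.card_le_card
  apply Finset.monotone_filter_right
  rintro A _ ⟨hne, hgcd⟩
  refine ⟨hne, ?_⟩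
  by_cases h : n ∈ A
  · rw [Finset.insert_eq_self.mpr h, hgcd]
  · rw [Finset.gcd_insert, hgcd, id]
    exact Nat.gcd_one_right n

lemma Phi_le_two_pow (n : ℕ) : Phi n ≤ 2 ^ n := by
  calc Phi n ≤ (Finset.Icc 1 n).powerset.card := Finset.card_filter_le _ _
    _ = 2 ^ n := by rw [Finset.card_powerset, Nat.card_Icc]; norm_num

lemma f_le_D {n : ℕ} (hn : 0 < n) : f n ≤ D n :=
  Finset.single_le_sum (fun d _ => Nat.zero_le (f d)) (Nat.mem_divisors_self n hn.ne')

lemma D_le (n : ℕ) : D n ≤ 2 ^ n + n * 2 ^ (n / 2) := by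
  rcases Nat.eq_zero_or_pos n with rfl | hn
  · simp [D]
  rw [D, ← Nat.insert_self_properDivisors hn.ne',
    Finset.sum_insert Nat.self_notMem_properDivisors]
  have h1 : ∑ d ∈ n.properDivisors, f d ≤ n * 2 ^ (n / 2) := by
    have hbound : ∀ d ∈ n.properDivisors, f d ≤ 2 ^ (n / 2) := by
      intro d hd
      obtain ⟨hdvd, hlt⟩ := Nat.mem_properDivisors.mp hd
      have hdle : d ≤ n / 2 := by
        obtain ⟨k, hk⟩ := hdvd
        rw [Nat.le_div_iff_mul_le (by norm_num)]
        rcases k with _ | _ | k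
        · omega
        · omega
        · calc d * 2 ≤ d * (k + 2) := Nat.mul_le_mul_left d (by omega)
            _ = n := hk.symm
      exact le_trans (f_le_two_pow d) (Nat.pow_le_pow_right (by norm_num) hdle)
    calc ∑ d ∈ n.properDivisors, f d ≤ n.properDivisors.card * 2 ^ (n / 2) :=
          Finset.sum_le_card_nsmul _ _ _ hbound
      _ ≤ n * 2 ^ (n / 2) := by
          refine Nat.mul_le_mul_right _ (le_trans
            (Finset.card_le_card (t := Finset.range n)
              fun d hd => Finset.mem_range.mpr (Nat.mem_properDivisors.mp hd).2) ?_)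
          simp
  have h2 := f_le_two_pow n
  omega

lemma eps_tendsto_zero :
    Filter.Tendsto (fun n : ℕ => ((n : ℝ) * 2 ^ (n / 2) + 1) / 2 ^ n) Filter.atTop (nhds 0) := by
  have hh : Filter.Tendsto (fun m : ℕ => ((2 * m + 2 : ℝ)) / 2 ^ m) Filter.atTop (nhds 0) := by
    have h1 : Filter.Tendsto (fun m : ℕ => (m : ℝ) * (1 / 2 : ℝ) ^ m) Filter.atTop (nhds 0) :=
      tendsto_self_mul_const_pow_of_lt_one (by norm_num) (by norm_num)
    have h2 : Filter.Tendsto (fun m : ℕ => ((1 / 2 : ℝ)) ^ m) Filter.atTop (nhds 0) :=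
      tendsto_pow_atTop_nhds_zero_of_lt_one (by norm_num) (by norm_num)
    have h3 := (h1.const_mul 2).add (h2.const_mul 2)
    simp only [mul_zero, add_zero] at h3
    refine Filter.Tendsto.congr (fun m => ?_) h3
    rw [div_pow, one_pow]
    field_simp
  have hdiv : Filter.Tendsto (fun n : ℕ => n / 2) Filter.atTop Filter.atTop :=
    Filter.tendsto_atTop_atTop.mpr fun b => ⟨2 * b, fun a ha => by omega⟩
  refine squeeze_zero (fun n => by positivity) (fun n => ?_) (hh.comp hdiv)
  simp only [Function.comp]
  have hn2 : (2 : ℝ) ^ n ≥ 2 ^ (n / 2) * 2 ^ (n / 2) := by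
    rw [← pow_add]
    exact pow_le_pow_right₀ (by norm_num) (by omega)
  have hpos : (0 : ℝ) < 2 ^ (n / 2) := by positivity
  have hnum : ((n : ℝ) * 2 ^ (n / 2) + 1) ≤ (2 * (n / 2 : ℕ) + 2) * 2 ^ (n / 2) := by
    have h1 : (1 : ℝ) ≤ 2 ^ (n / 2) := one_le_pow₀ (by norm_num)
    have h2 : (n : ℝ) ≤ 2 * (n / 2 : ℕ) + 1 := by
      have : n ≤ 2 * (n / 2) + 1 := by omega
      exact_mod_cast this
    nlinarith
  calc ((n : ℝ) * 2 ^ (n / 2) + 1) / 2 ^ n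
      ≤ ((2 * (n / 2 : ℕ) + 2) * 2 ^ (n / 2)) / (2 ^ (n / 2) * 2 ^ (n / 2)) := by
        exact div_le_div₀ (by positivity) hnum (by positivity) hn2
    _ = (2 * (n / 2 : ℕ) + 2) / 2 ^ (n / 2) := by
        rw [mul_div_mul_right _ _ (ne_of_gt hpos)]
  
lemma squeeze_one {g : ℕ → ℕ}
    (hlo : ∀ n, 1 ≤ n → 2 ^ n ≤ g n + (n * 2 ^ (n / 2) + 1))
    (hhi : ∀ n, 1 ≤ n → g n ≤ 2 ^ n + (n * 2 ^ (n / 2) + 1)) :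
    Filter.Tendsto (fun n : ℕ => (g n : ℝ) / 2 ^ n) Filter.atTop (nhds 1) := by
  have heps := eps_tendsto_zero
  have hlow : Filter.Tendsto (fun n : ℕ => 1 - ((n : ℝ) * 2 ^ (n / 2) + 1) / 2 ^ n)
      Filter.atTop (nhds 1) := by
    simpa using (tendsto_const_nhds (x := (1 : ℝ))).sub heps
  have hup : Filter.Tendsto (fun n : ℕ => 1 + ((n : ℝ) * 2 ^ (n / 2) + 1) / 2 ^ n)
      Filter.atTop (nhds 1) := by
    simpa using (tendsto_const_nhds (x := (1 : ℝ))).add heps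
  refine tendsto_of_tendsto_of_tendsto_of_le_of_le' hlow hup ?_ ?_
  · filter_upwards [Filter.eventually_ge_atTop 1] with n hn
    have h := hlo n hn
    have hpos : (0 : ℝ) < 2 ^ n := by positivity
    rw [le_div_iff₀ hpos, sub_mul, one_mul, div_mul_cancel₀ _ (ne_of_gt hpos),
      sub_le_iff_le_add]
    exact_mod_cast h
  · filter_upwards [Filter.eventually_ge_atTop 1] with n hn
    have h := hhi n hn
    have hpos : (0 : ℝ) < 2 ^ n := by positivity
    rw [div_le_iff₀ hpos, add_mul, one_mul, div_mul_cancel₀ _ (ne_of_gt hpos)]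
    exact_mod_cast h

/-- `f(n)/2^n`, `Φ(n)/2^n`, and `D(n)/2^n` all tend to `1`. -/
theorem tendsto_div_two_pow :
    Filter.Tendsto (fun n : ℕ => (f n : ℝ) / 2 ^ n) Filter.atTop (nhds 1) ∧
    Filter.Tendsto (fun n : ℕ => (Phi n : ℝ) / 2 ^ n) Filter.atTop (nhds 1) ∧
    Filter.Tendsto (fun n : ℕ => (D n : ℝ) / 2 ^ n) Filter.atTop (nhds 1) := by
  refine ⟨?_, ?_, ?_⟩
  · exact squeeze_one (fun n _ => two_pow_le_f n)
      (fun n _ => le_trans (f_le_two_pow n) (by omega))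
  · exact squeeze_one
      (fun n _ => le_trans (two_pow_le_f n) (by have := f_le_Phi n; omega))
      (fun n _ => le_trans (Phi_le_two_pow n) (by omega))
  · exact squeeze_one
      (fun n hn => le_trans (two_pow_le_f n) (by have := f_le_D hn; omega))
      (fun n _ => le_trans (D_le n) (by omega))
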